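/- Fix δ > 0 and rate R₁ = 3/2 − δ (per symbol in base-2 log of |𝒳₁|=4 alphabet, i.e., 2^{n R₁} codewords over an alphabet of size 4ⁿ). Choose a uniformly random injective map f: [2^{nR₁}] → 𝒳₁ⁿ with |𝒳₁| = 4. Then with probability at least 1 − 2^{−0.4n} (for sufficiently large n), for every subset S ⊆ 𝒳₁ⁿ of size at most 2^{n/2} arising as a preimage set of a good output, the number of messages w with f(w) ∈ S is at most ⌈3/δ⌉. -/

import Mathlib

open scoped BigOperators Classical

/-- First-encoder input alphabet `𝒳₁ = {a, b, A, B}` of Dueck's MAC. -/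
inductive DXA | a | b | A | B
deriving DecidableEq

instance : Fintype DXA :=
  ⟨{DXA.a, DXA.b, DXA.A, DXA.B}, fun x => by cases x <;> simp⟩

/-- First output component alphabet `𝒴₁ = {a, b, c, A, B, C}` of Dueck's MAC. -/
inductive DYA | a | b | c | A | B | C
deriving DecidableEq

instance : Fintype DYA :=
  ⟨{DYA.a, DYA.b, DYA.c, DYA.A, DYA.B, DYA.C}, fun x => by cases x <;> simp⟩

/-- Dueck's deterministic MAC `W : 𝒳₁ × {0,1} → 𝒴₁ × {0,1}`. -/
def DW : DXA → Bool → DYA × Bool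
  | .a, false => (.c, false)
  | .b, false => (.c, false)
  | .A, true  => (.C, true)
  | .B, true  => (.C, true)
  | .a, true  => (.a, true)
  | .b, true  => (.b, true)
  | .A, false => (.A, false)
  | .B, false => (.B, false)

/-- Number of erased coordinates (`c` or `C`) of an output word. -/
noncomputable def erasures (n : ℕ) (y : Fin n → DYA) : ℕ :=
  (Finset.univ.filter fun t => y t = DYA.c ∨ y t = DYA.C).card

/-- An output word is good if at most half of its coordinates are erased. -/
def GoodOut (n : ℕ) (y : Fin n → DYA) : Prop := 2 * erasures n y ≤ n

instance : Inhabited DXA := ⟨DXA.a⟩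

open Finset


def recB : DYA → Bool
  | .c => false | .C => true | .a => true | .b => true | .A => false | .B => false

lemma DW_snd_eq : ∀ (x : DXA) (b : Bool), (DW x b).2 = recB (DW x b).1 := by decide

lemma preA_card : ∀ (c₁ : DYA) (c₂ : Bool),
    ((univ : Finset DXA).filter fun x => ∃ b, DW x b = (c₁, c₂)).card
      ≤ if c₁ = DYA.c ∨ c₁ = DYA.C then 2 else 1 := by decide

lemma preS_card (n : ℕ) (y₁ : Fin n → DYA) (y₂ : Fin n → Bool) :
    ((univ : Finset (Fin n → DXA)).filter fun x => ∃ x₂ : Fin n → Bool,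
        ∀ t, DW (x t) (x₂ t) = (y₁ t, y₂ t)).card ≤ 2 ^ erasures n y₁ := by
  have hsub : ((univ : Finset (Fin n → DXA)).filter fun x => ∃ x₂ : Fin n → Bool,
        ∀ t, DW (x t) (x₂ t) = (y₁ t, y₂ t))
      ⊆ Fintype.piFinset (fun t => (univ.filter (fun x : DXA => ∃ b, DW x b = (y₁ t, y₂ t)))) := by
    intro x hx
    rw [Fintype.mem_piFinset]
    obtain ⟨x₂, h⟩ := (mem_filter.mp hx).2
    intro t
    exact mem_filter.mpr ⟨mem_univ _, ⟨x₂ t, h t⟩⟩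
  calc ((univ : Finset (Fin n → DXA)).filter fun x => ∃ x₂ : Fin n → Bool,
        ∀ t, DW (x t) (x₂ t) = (y₁ t, y₂ t)).card
      ≤ (Fintype.piFinset (fun t => (univ.filter (fun x : DXA => ∃ b, DW x b = (y₁ t, y₂ t))))).card :=
        Finset.card_le_card hsub
    _ = ∏ t, ((univ : Finset DXA).filter (fun x => ∃ b, DW x b = (y₁ t, y₂ t))).card :=
        Fintype.card_piFinset _
    _ ≤ ∏ t, if y₁ t = DYA.c ∨ y₁ t = DYA.C then 2 else 1 :=
        Finset.prod_le_prod' (fun t _ => preA_card (y₁ t) (y₂ t))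
    _ = 2 ^ erasures n y₁ := by
        rw [Finset.prod_ite, Finset.prod_const, Finset.prod_const, one_pow, mul_one]
        congr! 2

lemma goodset_card (n : ℕ) :
    ((univ : Finset ((Fin n → DYA) × (Fin n → Bool))).filter fun y =>
        ∃ x : Fin n → DXA, ∃ x₂ : Fin n → Bool,
          ∀ t, DW (x t) (x₂ t) = (y.1 t, y.2 t)).card ≤ 6 ^ n := by
  have h6 : Fintype.card DYA = 6 := by decide
  have := Finset.card_le_card_of_injOn (f := fun y : (Fin n → DYA) × (Fin n → Bool) => y.1)
    (s := (univ : Finset ((Fin n → DYA) × (Fin n → Bool))).filter fun y =>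
        ∃ x : Fin n → DXA, ∃ x₂ : Fin n → Bool,
          ∀ t, DW (x t) (x₂ t) = (y.1 t, y.2 t))
    (t := (univ : Finset (Fin n → DYA))) (fun y _ => mem_univ _) ?_
  · calc _ ≤ (univ : Finset (Fin n → DYA)).card := this
      _ = 6 ^ n := by rw [card_univ, Fintype.card_fun, h6, Fintype.card_fin]
  · intro y hy y' hy' h
    obtain ⟨x, x₂, hx⟩ := (mem_filter.mp hy).2
    obtain ⟨x', x₂', hx'⟩ := (mem_filter.mp hy').2
    have h2 : y.2 = y'.2 := by
      funext t
      have e1 : y.2 t = recB (y.1 t) := by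
        have := DW_snd_eq (x t) (x₂ t); rw [hx t] at this; exact this
      have e2 : y'.2 t = recB (y'.1 t) := by
        have := DW_snd_eq (x' t) (x₂' t); rw [hx' t] at this; exact this
      rw [e1, e2, show y.1 = y'.1 from h]
    exact Prod.ext (show y.1 = y'.1 from h) h2

lemma nat_arith2 (X m l : ℕ) (h1 : l ≤ m) (h2 : m < X) : (X - m) + l ≤ (X - (m - l)) + 1 := by
  omega

lemma descFactorial_split (n k : ℕ) : ∀ j : ℕ,
    n.descFactorial (j + k) = (n - k).descFactorial j * n.descFactorial k
  | 0 => by simp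
  | j + 1 => by
    have h : n - (j + k) = n - k - j := by omega
    rw [show j + 1 + k = (j + k) + 1 from by omega, Nat.descFactorial_succ,
      descFactorial_split n k j, Nat.descFactorial_succ, h, Nat.mul_assoc]

lemma pow_le_descFactorial (c m : ℕ) : ∀ j : ℕ, c + j ≤ m + 1 → c ^ j ≤ m.descFactorial j
  | 0, _ => by simp
  | j + 1, h => by
    rw [pow_succ, Nat.descFactorial_succ, Nat.mul_comm (m - j)]
    exact Nat.mul_le_mul (pow_le_descFactorial c m j (by omega)) (by omega)

lemma card_inj_filter {α β : Type*} [DecidableEq α] [Fintype α] [Fintype β] [DecidableEq β]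
    {inst : DecidablePred (Function.Injective : (α → β) → Prop)} :
    (@Finset.filter _ _ inst (univ : Finset (α → β))).card
      = (Fintype.card β).descFactorial (Fintype.card α) := by
  classical
  rw [Finset.filter_congr_decidable]
  rw [← Fintype.card_embedding_eq (α := α) (β := β)]
  rw [← Fintype.card_coe]
  exact Fintype.card_congr ((Equiv.subtypeEquivRight (by simp)).trans
    (Equiv.subtypeInjectiveEquivEmbedding α β))

lemma count_constrained {α β : Type*} [Fintype α] [Fintype β] [DecidableEq α] [DecidableEq β]
    [Inhabited β] (S : Finset β) (T : Finset α)
    {i1 : DecidablePred (Function.Injective : (α → β) → Prop)}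
    {i2 : DecidablePred fun f : α → β => ∀ w ∈ T, f w ∈ S} :
    (@Finset.filter _ _ i2 (@Finset.filter _ _ i1 (univ : Finset (α → β)))).card
      ≤ S.card ^ T.card * (Fintype.card β).descFactorial (Fintype.card α - T.card) := by
  rw [Finset.filter_congr_decidable, Finset.filter_congr_decidable]
  set A := Fintype.piFinset (fun a : α => if a ∈ T then S else {default}) with hA
  set B := (univ : Finset ((↥(Tᶜ : Finset α)) → β)).filter Function.Injective with hB
  have hcard : (A ×ˢ B).card
      = S.card ^ T.card * (Fintype.card β).descFactorial (Fintype.card α - T.card) := by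
    rw [Finset.card_product]
    congr 1
    · rw [hA, Fintype.card_piFinset]
      have : ∀ a : α, (if a ∈ T then S else ({default} : Finset β)).card
          = if a ∈ T then S.card else 1 := by intro a; split_ifs <;> simp
      simp only [this]
      rw [Finset.prod_ite_mem, Finset.univ_inter, Finset.prod_const]
    · rw [hB, card_inj_filter, Fintype.card_coe, Finset.card_compl]
  rw [← hcard]
  apply Finset.card_le_card_of_injOn
    (fun f => (fun a => if a ∈ T then f a else default, fun a : ↥(Tᶜ : Finset α) => f a.1))
  · intro f hf
    simp only [Finset.mem_coe, Finset.mem_filter, Finset.mem_univ, true_and] at hf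
    rw [Finset.mem_coe, Finset.mem_product]
    refine ⟨?_, ?_⟩
    · rw [hA, Fintype.mem_piFinset]
      intro a
      dsimp only
      split_ifs with h
      · exact hf.2 a h
      · exact Finset.mem_singleton_self _
    · rw [hB, Finset.mem_filter]
      exact ⟨Finset.mem_univ _, hf.1.comp Subtype.val_injective⟩
  · intro f hf g hg h
    simp only [Prod.mk.injEq] at h
    funext a
    by_cases ha : a ∈ T
    · have := congrFun h.1 a
      simpa [ha] using this
    · exact congrFun h.2 ⟨a, by simpa using ha⟩

lemma bad_count (n M L : ℕ) (hML : L + 1 ≤ M) :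
    (((univ : Finset (Fin M → Fin n → DXA)).filter fun f => Function.Injective f).filter
        (fun f => ¬ ∀ (y₁ : Fin n → DYA) (y₂ : Fin n → Bool), GoodOut n y₁ →
          ((univ : Finset (Fin M)).filter fun w => ∃ x₂ : Fin n → Bool,
              ∀ t, DW (f w t) (x₂ t) = (y₁ t, y₂ t)).card ≤ L)).card
      ≤ 6 ^ n * M.choose (L + 1) *
        ((2 ^ (n / 2)) ^ (L + 1) * (4 ^ n).descFactorial (M - (L + 1))) := by
  set ℓ := L + 1 with hℓ
  set S : (Fin n → DYA) × (Fin n → Bool) → Finset (Fin n → DXA) :=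
    fun y => univ.filter (fun x => ∃ x₂ : Fin n → Bool, ∀ t, DW (x t) (x₂ t) = (y.1 t, y.2 t))
    with hS
  set G := (univ : Finset ((Fin n → DYA) × (Fin n → Bool))).filter
    (fun y => GoodOut n y.1 ∧ ∃ x : Fin n → DXA, ∃ x₂ : Fin n → Bool,
      ∀ t, DW (x t) (x₂ t) = (y.1 t, y.2 t)) with hG
  have hDXA : Fintype.card DXA = 4 := by decide
  have hX4 : Fintype.card (Fin n → DXA) = 4 ^ n := by
    rw [Fintype.card_fun, Fintype.card_fin, hDXA]
  have hsub : (((univ : Finset (Fin M → Fin n → DXA)).filter fun f => Function.Injective f).filter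
        (fun f => ¬ ∀ (y₁ : Fin n → DYA) (y₂ : Fin n → Bool), GoodOut n y₁ →
          ((univ : Finset (Fin M)).filter fun w => ∃ x₂ : Fin n → Bool,
              ∀ t, DW (f w t) (x₂ t) = (y₁ t, y₂ t)).card ≤ L))
      ⊆ G.biUnion (fun y => (powersetCard ℓ (univ : Finset (Fin M))).biUnion fun T =>
          ((univ : Finset (Fin M → Fin n → DXA)).filter fun f => Function.Injective f).filter
            (fun f => ∀ w ∈ T, f w ∈ S y)) := by
    intro f hf
    obtain ⟨hfΩ, hbad⟩ := mem_filter.mp hf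
    push_neg at hbad
    obtain ⟨y₁, y₂, hgood, hcount⟩ := hbad
    have h2 : ℓ ≤ ((univ : Finset (Fin M)).filter fun w => ∃ x₂ : Fin n → Bool,
        ∀ t, DW (f w t) (x₂ t) = (y₁ t, y₂ t)).card := hcount
    obtain ⟨T, hTsub, hTcard⟩ := Finset.exists_subset_card_eq h2
    have hTne : T.Nonempty := Finset.card_pos.mp (hTcard ▸ Nat.succ_pos L)
    obtain ⟨w₀, hw₀⟩ := hTne
    obtain ⟨x₂, hx₂⟩ := (mem_filter.mp (hTsub hw₀)).2
    rw [Finset.mem_biUnion]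
    refine ⟨(y₁, y₂), ?_, ?_⟩
    · rw [hG, mem_filter]
      exact ⟨mem_univ _, hgood, f w₀, x₂, hx₂⟩
    · rw [Finset.mem_biUnion]
      refine ⟨T, Finset.mem_powersetCard_univ.mpr hTcard, ?_⟩
      rw [mem_filter]
      refine ⟨hfΩ, fun w hw => ?_⟩
      rw [hS, mem_filter]
      exact ⟨mem_univ _, (mem_filter.mp (hTsub hw)).2⟩
  refine le_trans (Finset.card_le_card hsub) ?_
  refine le_trans Finset.card_biUnion_le ?_
  have hinner : ∀ y ∈ G, ((powersetCard ℓ (univ : Finset (Fin M))).biUnion fun T =>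
      ((univ : Finset (Fin M → Fin n → DXA)).filter fun f => Function.Injective f).filter
        (fun f => ∀ w ∈ T, f w ∈ S y)).card
      ≤ M.choose ℓ * ((2 ^ (n / 2)) ^ ℓ * (4 ^ n).descFactorial (M - ℓ)) := by
    intro y hy
    refine le_trans Finset.card_biUnion_le ?_
    have hterm : ∀ T ∈ powersetCard ℓ (univ : Finset (Fin M)),
        (((univ : Finset (Fin M → Fin n → DXA)).filter fun f => Function.Injective f).filter
          (fun f => ∀ w ∈ T, f w ∈ S y)).card
        ≤ (2 ^ (n / 2)) ^ ℓ * (4 ^ n).descFactorial (M - ℓ) := by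
      intro T hT
      have hTcard : T.card = ℓ := Finset.mem_powersetCard_univ.mp hT
      have h1 : (((univ : Finset (Fin M → Fin n → DXA)).filter fun f => Function.Injective f).filter
          (fun f => ∀ w ∈ T, f w ∈ S y)).card
          ≤ (S y).card ^ T.card
            * (Fintype.card (Fin n → DXA)).descFactorial (Fintype.card (Fin M) - T.card) :=
        count_constrained (S y) T
      rw [hX4, Fintype.card_fin, hTcard] at h1
      refine le_trans h1 (Nat.mul_le_mul_right _ ?_)
      apply Nat.pow_le_pow_left
      -- (S y).card ≤ 2 ^ (n / 2)
      have hSy : (S y).card ≤ 2 ^ erasures n y.1 := preS_card n y.1 y.2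
      have hgood : GoodOut n y.1 := ((mem_filter.mp hy).2).1
      have he : erasures n y.1 ≤ n / 2 := Nat.le_div_iff_mul_le (by norm_num) |>.mpr
        (by rw [Nat.mul_comm]; exact hgood)
      exact le_trans hSy (Nat.pow_le_pow_right (by norm_num) he)
    refine le_trans (Finset.sum_le_sum hterm) ?_
    rw [Finset.sum_const, Finset.card_powersetCard, Finset.card_univ, Fintype.card_fin,
      smul_eq_mul]
  refine le_trans (Finset.sum_le_sum hinner) ?_
  rw [Finset.sum_const, smul_eq_mul, ← Nat.mul_assoc]
  apply Nat.mul_le_mul_right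
  apply Nat.mul_le_mul_right
  -- G.card ≤ 6 ^ n
  refine le_trans (Finset.card_le_card ?_) (goodset_card n)
  rw [hG]
  intro y hy
  rw [mem_filter] at hy ⊢
  exact ⟨hy.1, hy.2.2⟩


lemma two_rpow_135 : (6:ℝ) ≤ (2:ℝ) ^ ((13:ℝ)/5) := by
  have h2 : (0:ℝ) < 2 := two_pos
  have h5 : ((2:ℝ) ^ ((13:ℝ)/5)) ^ (5:ℕ) = (2:ℝ) ^ (13:ℕ) := by
    rw [← Real.rpow_natCast ((2:ℝ) ^ ((13:ℝ)/5)) 5, ← Real.rpow_mul h2.le,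
      ← Real.rpow_natCast 2 13]
    norm_num
  have h6 : (6:ℝ) ^ (5:ℕ) ≤ ((2:ℝ) ^ ((13:ℝ)/5)) ^ (5:ℕ) := by
    rw [h5]; norm_num
  exact (pow_le_pow_iff_left₀ (by norm_num) (Real.rpow_nonneg h2.le _) (by norm_num)).mp h6

lemma real_core (δ : ℝ) (hδ : 0 < δ) (n ℓ : ℕ) (m s d : ℝ)
    (hm : 0 ≤ m) (hs : 0 ≤ s)
    (hmle : m ≤ 2 ^ ((n:ℝ) * (3/2 - δ)))
    (hsle : s ≤ 2 ^ ((n:ℝ)/2))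
    (hdge : 2 ^ (2*(n:ℝ) - 1) ≤ d)
    (hl1 : (3:ℝ) + δ ≤ δ * ℓ)
    (hl2 : (ℓ:ℝ) ≤ δ * n) :
    6^n * m^ℓ * s^ℓ ≤ 2 ^ (-(0.4:ℝ)*n) * d^ℓ := by
  have h2 : (0:ℝ) < 2 := two_pos
  have hd0 : (0:ℝ) ≤ d := le_trans (Real.rpow_nonneg h2.le _) hdge
  have hms : m^ℓ * s^ℓ ≤ ((2:ℝ) ^ ((2*(n:ℝ)-1) + (1 - δ*n)))^ℓ := by
    rw [← mul_pow]
    apply pow_le_pow_left₀ (by positivity)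
    calc m * s ≤ 2 ^ ((n:ℝ) * (3/2 - δ)) * 2 ^ ((n:ℝ)/2) :=
          mul_le_mul hmle hsle hs (Real.rpow_nonneg h2.le _)
      _ = 2 ^ ((n:ℝ) * (3/2 - δ) + (n:ℝ)/2) := (Real.rpow_add h2 _ _).symm
      _ = 2 ^ ((2*(n:ℝ)-1) + (1 - δ*n)) := by ring_nf
  have hsplit : ((2:ℝ) ^ ((2*(n:ℝ)-1) + (1 - δ*n)))^ℓ
      = ((2:ℝ) ^ (2*(n:ℝ)-1))^ℓ * ((2:ℝ) ^ (1 - δ*n))^ℓ := by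
    rw [Real.rpow_add h2, mul_pow]
  have hkey : (6:ℝ)^n * ((2:ℝ) ^ (1 - δ*n))^ℓ ≤ 2 ^ (-(0.4:ℝ)*n) := by
    have e1 : ((2:ℝ) ^ (1 - δ*n))^ℓ = (2:ℝ) ^ ((1 - δ*n) * ℓ) := by
      rw [← Real.rpow_natCast ((2:ℝ) ^ (1 - δ*n)) ℓ, ← Real.rpow_mul h2.le]
    have e2 : (1 - δ*(n:ℝ)) * (ℓ:ℕ) ≤ -3*(n:ℝ) := by
      have hn0 : (0:ℝ) ≤ n := Nat.cast_nonneg n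
      have h3 : ((3:ℝ) + δ) * n ≤ (δ * ℓ) * n := mul_le_mul_of_nonneg_right hl1 hn0
      nlinarith
    have e3 : ((2:ℝ) ^ (1 - δ*n))^ℓ ≤ (2:ℝ) ^ (-3*(n:ℝ)) := by
      rw [e1]; exact Real.rpow_le_rpow_of_exponent_le one_le_two e2
    have e4 : (6:ℝ)^n ≤ (2:ℝ) ^ ((13/5:ℝ)*n) := by
      calc (6:ℝ)^n ≤ ((2:ℝ) ^ ((13:ℝ)/5))^n := pow_le_pow_left₀ (by norm_num) two_rpow_135 n
        _ = (2:ℝ) ^ ((13/5:ℝ)*n) := by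
            rw [← Real.rpow_natCast ((2:ℝ) ^ ((13:ℝ)/5)) n, ← Real.rpow_mul h2.le]
    calc (6:ℝ)^n * ((2:ℝ) ^ (1 - δ*n))^ℓ
        ≤ (2:ℝ) ^ ((13/5:ℝ)*n) * (2:ℝ) ^ (-3*(n:ℝ)) :=
          mul_le_mul e4 e3 (by positivity) (by positivity)
      _ = (2:ℝ) ^ ((13/5:ℝ)*n + -3*(n:ℝ)) := (Real.rpow_add h2 _ _).symm
      _ = 2 ^ (-(0.4:ℝ)*n) := by norm_num; ring_nf
  calc (6:ℝ)^n * m^ℓ * s^ℓ = (6:ℝ)^n * (m^ℓ * s^ℓ) := by ring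
    _ ≤ (6:ℝ)^n * (((2:ℝ) ^ (2*(n:ℝ)-1))^ℓ * ((2:ℝ) ^ (1 - δ*n))^ℓ) := by
        rw [← hsplit]
        exact mul_le_mul_of_nonneg_left hms (by positivity)
    _ = ((6:ℝ)^n * ((2:ℝ) ^ (1 - δ*n))^ℓ) * ((2:ℝ) ^ (2*(n:ℝ)-1))^ℓ := by ring
    _ ≤ (2 ^ (-(0.4:ℝ)*n)) * ((2:ℝ) ^ (2*(n:ℝ)-1))^ℓ :=
        mul_le_mul_of_nonneg_right hkey (by positivity)
    _ ≤ (2 ^ (-(0.4:ℝ)*n)) * d^ℓ := by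
        apply mul_le_mul_of_nonneg_left _ (by positivity)
        exact pow_le_pow_left₀ (by positivity) hdge ℓ


/-- Probabilistic list-size bound for Dueck's MAC: a uniformly random injective
codebook `f : [M n] → 𝒳₁ⁿ` with `M n ≤ 2^{n(3/2−δ)}` codewords satisfies, with
probability at least `1 − 2^{−0.4n}` for sufficiently large `n`, that for every good
output `(y₁ⁿ,y₂ⁿ)` at most `⌈3/δ⌉` messages `w` have `f w` in the preimage set
`Pre₁(y₁ⁿ,y₂ⁿ) = {x₁ⁿ | ∃ x₂ⁿ, Wⁿ(x₁ⁿ,x₂ⁿ) = (y₁ⁿ,y₂ⁿ)}`. -/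
theorem dueck_random_codebook_list_size (δ : ℝ) (hδ : 0 < δ) (M : ℕ → ℕ)
    (hM : ∀ n : ℕ, (M n : ℝ) ≤ 2 ^ ((n : ℝ) * (3 / 2 - δ))) :
    ∃ n₀ : ℕ, ∀ n ≥ n₀,
      1 - (2 : ℝ) ^ (-(0.4 : ℝ) * n) ≤
        (((Finset.univ.filter fun f : Fin (M n) → Fin n → DXA =>
            Function.Injective f).filter fun f =>
              ∀ (y₁ : Fin n → DYA) (y₂ : Fin n → Bool), GoodOut n y₁ →
                (Finset.univ.filter fun w : Fin (M n) =>
                  ∃ x₂ : Fin n → Bool,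
                    ∀ t, DW (f w t) (x₂ t) = (y₁ t, y₂ t)).card ≤ ⌈3 / δ⌉₊).card : ℝ) /
          ((Finset.univ.filter fun f : Fin (M n) → Fin n → DXA =>
            Function.Injective f).card : ℝ) := by
  refine ⟨max 2 (⌈((⌈3/δ⌉₊:ℝ) + 1) / δ⌉₊ + 1), fun n hn => ?_⟩
  have hn2 : 2 ≤ n := le_trans (le_max_left _ _) hn
  have hnR : (2:ℝ) ≤ (n:ℝ) := by exact_mod_cast hn2
  have h2 : (0:ℝ) < 2 := two_pos
  have hεpos : 0 < (2:ℝ) ^ (-(0.4:ℝ)*(n:ℝ)) := Real.rpow_pos_of_pos h2 _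
  have hDXA : Fintype.card DXA = 4 := by decide
  have hΩ : ((Finset.univ.filter fun f : Fin (M n) → Fin n → DXA =>
      Function.Injective f).card) = (4^n).descFactorial (M n) := by
    rw [card_inj_filter, Fintype.card_fun, Fintype.card_fin, Fintype.card_fin, hDXA]
  have hMR := hM n
  have hM2 : (M n : ℝ) ≤ (2:ℝ) ^ (2*(n:ℝ)-1) := by
    refine le_trans hMR (Real.rpow_le_rpow_of_exponent_le one_le_two ?_)
    nlinarith
  have h4nR : ((4:ℝ))^n = (2:ℝ) ^ (2*(n:ℝ)) := by
    rw [show (4:ℝ) = (2:ℝ)^(2:ℕ) by norm_num, ← pow_mul, ← Real.rpow_natCast 2 (2*n)]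
    push_cast; ring_nf
  have hMlt : M n < 4^n := by
    have hlt : (M n : ℝ) < ((4^n : ℕ) : ℝ) := by
      push_cast
      rw [h4nR]
      exact lt_of_le_of_lt hM2 (Real.rpow_lt_rpow_of_exponent_lt one_lt_two (by linarith))
    exact_mod_cast hlt
  have hΩpos : 0 < (4^n).descFactorial (M n) := by
    rcases Nat.eq_zero_or_pos ((4^n).descFactorial (M n)) with h | h
    · exact absurd (Nat.descFactorial_eq_zero_iff_lt.mp h) (Nat.lt_asymm hMlt)
    · exact h
  have hΩR : (0:ℝ) < (((Finset.univ.filter fun f : Fin (M n) → Fin n → DXA =>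
      Function.Injective f).card : ℕ) : ℝ) := by
    rw [hΩ]; exact_mod_cast hΩpos
  by_cases hcase : M n ≤ ⌈3/δ⌉₊
  · have hall : ∀ f ∈ (Finset.univ.filter fun f : Fin (M n) → Fin n → DXA =>
        Function.Injective f),
        ∀ (y₁ : Fin n → DYA) (y₂ : Fin n → Bool), GoodOut n y₁ →
          (Finset.univ.filter fun w : Fin (M n) => ∃ x₂ : Fin n → Bool,
            ∀ t, DW (f w t) (x₂ t) = (y₁ t, y₂ t)).card ≤ ⌈3/δ⌉₊ := by
      intro f _ y₁ y₂ _
      refine le_trans (le_trans (Finset.card_filter_le _ _) (le_of_eq ?_)) hcase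
      rw [Finset.card_univ, Fintype.card_fin]
    rw [Finset.filter_true_of_mem hall, div_self (ne_of_gt hΩR)]
    linarith
  · push_neg at hcase
    have hLM : ⌈3/δ⌉₊ + 1 ≤ M n := hcase
    have hbadcount := bad_count n (M n) ⌈3/δ⌉₊ hLM
    have hsplit := Finset.card_filter_add_card_filter_not
      (s := (Finset.univ.filter fun f : Fin (M n) → Fin n → DXA => Function.Injective f))
      (p := fun f => ∀ (y₁ : Fin n → DYA) (y₂ : Fin n → Bool), GoodOut n y₁ →
        (Finset.univ.filter fun w : Fin (M n) => ∃ x₂ : Fin n → Bool,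
          ∀ t, DW (f w t) (x₂ t) = (y₁ t, y₂ t)).card ≤ ⌈3/δ⌉₊)
    set ℓ := ⌈3/δ⌉₊ + 1 with hℓdef
    -- descFactorial factorization
    have hΩeq : (4^n).descFactorial (M n)
        = (4^n - (M n - ℓ)).descFactorial ℓ * (4^n).descFactorial (M n - ℓ) := by
      have h := descFactorial_split (4^n) (M n - ℓ) ℓ
      rw [Nat.add_sub_cancel' hLM] at h
      exact h
    have hA : (4^n - M n) ^ ℓ ≤ (4^n - (M n - ℓ)).descFactorial ℓ :=
      pow_le_descFactorial _ _ _ (nat_arith2 _ _ _ hLM hMlt)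
    have hC : (M n).choose ℓ ≤ (M n)^ℓ := Nat.choose_le_pow _ _
    -- real-valued core inequality
    have hl1 : (3:ℝ) + δ ≤ δ * (ℓ:ℝ) := by
      have hceil : (3:ℝ)/δ ≤ (⌈3/δ⌉₊ : ℝ) := Nat.le_ceil _
      have : (ℓ:ℝ) = (⌈3/δ⌉₊ : ℝ) + 1 := by rw [hℓdef]; push_cast; ring
      rw [this, mul_add, mul_one]
      have h3 : (3:ℝ) ≤ δ * (⌈3/δ⌉₊ : ℝ) := by
        calc (3:ℝ) = δ * ((3:ℝ)/δ) := by field_simp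
          _ ≤ δ * (⌈3/δ⌉₊ : ℝ) := mul_le_mul_of_nonneg_left hceil hδ.le
      linarith
    have hl2 : (ℓ:ℝ) ≤ δ * (n:ℝ) := by
      have hcn : (⌈((⌈3/δ⌉₊:ℝ) + 1) / δ⌉₊ + 1 : ℕ) ≤ n := le_trans (le_max_right _ _) hn
      have hcnR : (⌈((⌈3/δ⌉₊:ℝ) + 1) / δ⌉₊ : ℝ) + 1 ≤ (n:ℝ) := by exact_mod_cast hcn
      have hceil2 : ((⌈3/δ⌉₊:ℝ) + 1) / δ ≤ (⌈((⌈3/δ⌉₊:ℝ) + 1) / δ⌉₊ : ℝ) := Nat.le_ceil _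
      have hdiv : ((⌈3/δ⌉₊:ℝ) + 1) / δ ≤ (n:ℝ) := by linarith
      have : (ℓ:ℝ) = (⌈3/δ⌉₊ : ℝ) + 1 := by rw [hℓdef]; push_cast; ring
      rw [this]
      calc (⌈3/δ⌉₊ : ℝ) + 1 = (((⌈3/δ⌉₊:ℝ) + 1) / δ) * δ := by field_simp
        _ ≤ (n:ℝ) * δ := mul_le_mul_of_nonneg_right hdiv hδ.le
        _ = δ * (n:ℝ) := mul_comm _ _
    have hsR : ((2^(n/2) : ℕ) : ℝ) ≤ (2:ℝ) ^ ((n:ℝ)/2) := by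
      push_cast
      rw [← Real.rpow_natCast 2 (n/2)]
      refine Real.rpow_le_rpow_of_exponent_le one_le_two ?_
      exact_mod_cast Nat.cast_div_le
    have hdR : (2:ℝ) ^ (2*(n:ℝ)-1) ≤ ((4^n - M n : ℕ) : ℝ) := by
      have hsub : ((4^n - M n : ℕ) : ℝ) = ((4:ℝ)^n) - (M n : ℝ) := by
        rw [Nat.cast_sub hMlt.le]; push_cast; ring
      have hdbl : (2:ℝ) ^ (2*(n:ℝ)) = (2:ℝ) ^ (2*(n:ℝ)-1) * 2 := by
        rw [show (2*(n:ℝ)) = (2*(n:ℝ)-1) + 1 by ring, Real.rpow_add h2, Real.rpow_one]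
        ring_nf
      rw [hsub, h4nR, hdbl]
      linarith
    have hcore : (6:ℝ)^n * ((M n : ℝ))^ℓ * (((2^(n/2) : ℕ) : ℝ))^ℓ
        ≤ (2:ℝ) ^ (-(0.4:ℝ)*(n:ℝ)) * (((4^n - M n : ℕ) : ℝ))^ℓ :=
      real_core δ hδ n ℓ _ _ _ (Nat.cast_nonneg _) (Nat.cast_nonneg _) hMR hsR hdR hl1 hl2
    -- put everything together
    have hbR : ((((Finset.univ.filter fun f : Fin (M n) → Fin n → DXA =>
          Function.Injective f).filter fun f =>
            ¬ ∀ (y₁ : Fin n → DYA) (y₂ : Fin n → Bool), GoodOut n y₁ →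
              (Finset.univ.filter fun w : Fin (M n) => ∃ x₂ : Fin n → Bool,
                ∀ t, DW (f w t) (x₂ t) = (y₁ t, y₂ t)).card ≤ ⌈3/δ⌉₊).card : ℕ) : ℝ)
        ≤ (2:ℝ) ^ (-(0.4:ℝ)*(n:ℝ)) *
          (((Finset.univ.filter fun f : Fin (M n) → Fin n → DXA =>
            Function.Injective f).card : ℕ) : ℝ) := by
      have hdf2 : (0:ℝ) ≤ (((4^n).descFactorial (M n - ℓ) : ℕ) : ℝ) := Nat.cast_nonneg _
      calc ((((Finset.univ.filter fun f : Fin (M n) → Fin n → DXA =>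
            Function.Injective f).filter fun f =>
              ¬ ∀ (y₁ : Fin n → DYA) (y₂ : Fin n → Bool), GoodOut n y₁ →
                (Finset.univ.filter fun w : Fin (M n) => ∃ x₂ : Fin n → Bool,
                  ∀ t, DW (f w t) (x₂ t) = (y₁ t, y₂ t)).card ≤ ⌈3/δ⌉₊).card : ℕ) : ℝ)
          ≤ ((6 ^ n * (M n).choose ℓ * ((2 ^ (n / 2)) ^ ℓ
              * (4 ^ n).descFactorial (M n - ℓ)) : ℕ) : ℝ) := by exact_mod_cast hbadcount
        _ = ((6:ℝ)^n * ((M n).choose ℓ : ℝ) * (((2^(n/2) : ℕ):ℝ))^ℓ)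
              * (((4^n).descFactorial (M n - ℓ) : ℕ) : ℝ) := by push_cast; ring
        _ ≤ ((2:ℝ) ^ (-(0.4:ℝ)*(n:ℝ)) * (((4^n - (M n - ℓ)).descFactorial ℓ : ℕ) : ℝ))
              * (((4^n).descFactorial (M n - ℓ) : ℕ) : ℝ) := by
            refine mul_le_mul_of_nonneg_right ?_ hdf2
            calc (6:ℝ)^n * ((M n).choose ℓ : ℝ) * (((2^(n/2) : ℕ):ℝ))^ℓ
                ≤ (6:ℝ)^n * ((M n : ℝ))^ℓ * (((2^(n/2) : ℕ):ℝ))^ℓ := by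
                  have : ((M n).choose ℓ : ℝ) ≤ ((M n : ℝ))^ℓ := by exact_mod_cast hC
                  have hnn : (0:ℝ) ≤ (((2^(n/2) : ℕ):ℝ))^ℓ := by positivity
                  exact mul_le_mul_of_nonneg_right
                    (mul_le_mul_of_nonneg_left this (by positivity)) hnn
              _ ≤ (2:ℝ) ^ (-(0.4:ℝ)*(n:ℝ)) * (((4^n - M n : ℕ) : ℝ))^ℓ := hcore
              _ ≤ (2:ℝ) ^ (-(0.4:ℝ)*(n:ℝ)) * (((4^n - (M n - ℓ)).descFactorial ℓ : ℕ) : ℝ) := by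
                  refine mul_le_mul_of_nonneg_left ?_ hεpos.le
                  exact_mod_cast hA
        _ = (2:ℝ) ^ (-(0.4:ℝ)*(n:ℝ)) *
              (((Finset.univ.filter fun f : Fin (M n) → Fin n → DXA =>
                Function.Injective f).card : ℕ) : ℝ) := by
            rw [hΩ, hΩeq]; push_cast; ring
    rw [le_div_iff₀ hΩR]
    have hgR : ((((Finset.univ.filter fun f : Fin (M n) → Fin n → DXA =>
          Function.Injective f).filter fun f =>
            ∀ (y₁ : Fin n → DYA) (y₂ : Fin n → Bool), GoodOut n y₁ →
              (Finset.univ.filter fun w : Fin (M n) => ∃ x₂ : Fin n → Bool,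
                ∀ t, DW (f w t) (x₂ t) = (y₁ t, y₂ t)).card ≤ ⌈3/δ⌉₊).card : ℕ) : ℝ)
        + ((((Finset.univ.filter fun f : Fin (M n) → Fin n → DXA =>
          Function.Injective f).filter fun f =>
            ¬ ∀ (y₁ : Fin n → DYA) (y₂ : Fin n → Bool), GoodOut n y₁ →
              (Finset.univ.filter fun w : Fin (M n) => ∃ x₂ : Fin n → Bool,
                ∀ t, DW (f w t) (x₂ t) = (y₁ t, y₂ t)).card ≤ ⌈3/δ⌉₊).card : ℕ) : ℝ)
        = (((Finset.univ.filter fun f : Fin (M n) → Fin n → DXA =>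
            Function.Injective f).card : ℕ) : ℝ) := by exact_mod_cast hsplit
    nlinarith [hΩR, hεpos]
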